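/- arXiv:2411.02705 — 3 statements merged into one kernel-verified Lean document; each statement's English description precedes it below -/
import Mathlib

section
/- Let 3 ≤ a ≤ b, both a and b even, and b ≤ 3a/2 − 2. Then every (a,b)-regular weighted graph of girth 4 has at least a+b+2 vertices, and one with exactly a+b+2 vertices exists; hence n(a,b,4) = a+b+2. -/
open Classical in
/-- Weight of a walk in `L ⊔ H`: light edges (in `L`) weigh 1, heavy edges weigh 2. -/
noncomputable def wWeight {V : Type*} (L H : SimpleGraph V) {u : V}
    (w : (L ⊔ H).Walk u u) : ℕ :=
  (w.edges.map fun e => if e ∈ L.edgeSet then 1 else 2).sum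

/-- `(L,H)` is an `(a,b)`-regular weighted graph of girth `g`. -/
def IsWGraph {V : Type*} (L H : SimpleGraph V) (a b g : ℕ) : Prop :=
  Disjoint L H ∧
  (∀ v, (L.neighborSet v).ncard = a) ∧
  (∀ v, (H.neighborSet v).ncard = b) ∧
  (∃ (u : V) (w : (L ⊔ H).Walk u u), w.IsCycle ∧ wWeight L H w = g) ∧
  (∀ (u : V) (w : (L ⊔ H).Walk u u), w.IsCycle → g ≤ wWeight L H w)

open Classical in
lemma lightIte_pos {V : Type*} (L : SimpleGraph V) {e : Sym2 V} (h : e ∈ L.edgeSet) :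
    (if e ∈ L.edgeSet then 1 else 2) = 1 := if_pos h

/-! ### Auxiliary walk tools -/

open Finset SimpleGraph

namespace SimpleGraph.Walk
variable {V : Type*} {G : SimpleGraph V}

/-- Initial segment of a walk: first `n` edges. -/
def takeW {u v : V} : (p : G.Walk u v) → (n : ℕ) → G.Walk u (p.getVert n)
  | .nil, _ => .nil
  | .cons _ _, 0 => .nil
  | .cons h q, n + 1 => (Walk.cons h (takeW q n)).copy rfl (getVert_cons_succ _ _).symm

lemma length_takeW {u v : V} (p : G.Walk u v) (n : ℕ) :
    (p.takeW n).length = min n p.length := by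
  induction p generalizing n with
  | nil => simp [takeW]
  | cons h q ih =>
    cases n with
    | zero => simp [takeW]; rfl
    | succ n => simp [takeW, ih, Nat.succ_min_succ]

lemma length_drop' {u v : V} (p : G.Walk u v) (n : ℕ) :
    (p.drop n).length = p.length - n := by
  induction p generalizing n with
  | nil => simp [drop]
  | cons h q ih =>
    cases n with
    | zero => simp [drop]
    | succ n => simp [drop, ih]

lemma getVert_drop' {u v : V} (p : G.Walk u v) (n m : ℕ) :
    (p.drop n).getVert m = p.getVert (n + m) := by
  induction p generalizing n with
  | nil => simp [drop, getVert]
  | cons h q ih =>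
    cases n with
    | zero => simp [drop]
    | succ n =>
      simp only [drop, getVert_copy, ih]
      rw [show n + 1 + m = (n + m) + 1 by omega]; exact (ih n).trans (getVert_cons_succ _ _).symm

/-- Segment of a walk from index `i` to index `j`. -/
def seg {u v : V} (p : G.Walk u v) (i j : ℕ) (hij : i ≤ j) :
    G.Walk (p.getVert i) (p.getVert j) :=
  ((p.drop i).takeW (j - i)).copy rfl (by rw [getVert_drop']; congr 1; omega)

lemma length_seg {u v : V} (p : G.Walk u v) {i j : ℕ} (hij : i ≤ j) (hj : j ≤ p.length) :
    (p.seg i j hij).length = j - i := by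
  simp [seg, length_takeW, length_drop']
  omega

end SimpleGraph.Walk

/-! ### Cycle helpers -/

lemma isCycle_triangle {V : Type*} {G : SimpleGraph V} {x y z : V}
    (hxy : G.Adj x y) (hyz : G.Adj y z) (hzx : G.Adj z x) :
    (Walk.cons hxy (Walk.cons hyz (Walk.cons hzx Walk.nil))).IsCycle := by
  have hxz : x ≠ z := hzx.ne'
  simp [Walk.isCycle_def, Walk.isTrail_def, hxy.ne, hyz.ne, hzx.ne, hxz,
    Sym2.eq_iff]
  aesop

lemma isCycle_quad {V : Type*} {G : SimpleGraph V} {x y z t : V}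
    (hxy : G.Adj x y) (hyz : G.Adj y z) (hzt : G.Adj z t) (htx : G.Adj t x)
    (hxz : x ≠ z) (hyt : y ≠ t) :
    (Walk.cons hxy (Walk.cons hyz (Walk.cons hzt (Walk.cons htx Walk.nil)))).IsCycle := by
  simp [Walk.isCycle_def, Walk.isTrail_def, hxy.ne, hyz.ne, hzt.ne, htx.ne, htx.ne',
    hxz, hyt, Sym2.eq_iff]
  aesop

lemma length3_walk {V : Type*} {G : SimpleGraph V} {u : V} (w : G.Walk u u)
    (h3 : w.length = 3) : ∃ (x y : V), G.Adj u x ∧ G.Adj x y ∧ G.Adj y u ∧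
      w.edges = [s(u, x), s(x, y), s(y, u)] := by
  cases w with
  | nil => simp at h3
  | cons h1 p =>
    cases p with
    | nil => simp at h3
    | cons h2 q =>
      cases q with
      | nil => simp at h3
      | cons h3' r =>
        cases r with
        | nil => exact ⟨_, _, h1, h2, h3', by simp⟩
        | cons h4 s => simp [Walk.length_cons] at h3

open Classical in
lemma wWeight_ge_length {V : Type*} (L H : SimpleGraph V) {u : V}
    (w : (L ⊔ H).Walk u u) : w.length ≤ wWeight L H w := by
  have key : ∀ (l : List (Sym2 V)),
      l.length ≤ (l.map fun e => if e ∈ L.edgeSet then 1 else 2).sum := by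
    intro l
    induction l with
    | nil => simp
    | cons e t ih =>
      simp only [List.map_cons, List.sum_cons, List.length_cons]
      split <;> omega
  calc w.length = w.edges.length := (Walk.length_edges w).symm
    _ ≤ _ := key w.edges

/-! ### The regularity/counting lemmas for the lower bound -/

lemma degree_eq_of_ncard' {V : Type*} [Fintype V] [DecidableEq V] (G : SimpleGraph V)
    [DecidableRel G.Adj] {a : ℕ} (hreg : ∀ v, (G.neighborSet v).ncard = a) (v : V) :
    (univ.filter (G.Adj v ·)).card = a := by
  rw [← neighborFinset_eq_filter, neighborFinset_def, ← Set.ncard_eq_toFinset_card']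
  exact hreg v

lemma even_card_of_no_oddWalk {V : Type*} [Fintype V] (G : SimpleGraph V) {a : ℕ}
    (ha : 0 < a) (hreg : ∀ v, (G.neighborSet v).ncard = a)
    (hno : ∀ (x : V) (w : G.Walk x x), w.length % 2 = 0) :
    Fintype.card V % 2 = 0 := by
  classical
  set root : V → V := fun v => (G.connectedComponentMk v).out with hroot
  have hre : ∀ v, G.Reachable v (root v) := fun v =>
    ConnectedComponent.eq.mp (Quot.out_eq _).symm
  set wk : (v : V) → G.Walk v (root v) := fun v => Classical.choice (hre v) with hwk
  set c : V → ℕ := fun v => (wk v).length % 2 with hc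
  have hc01 : ∀ v, c v = 0 ∨ c v = 1 := by intro v; simp only [hc]; omega
  have key : ∀ {x y}, G.Adj x y → c x ≠ c y := by
    intro x y hxy
    have hcomp : root x = root y :=
      congrArg Quot.out (ConnectedComponent.sound hxy.reachable)
    have hw := hno x (((Walk.cons hxy (wk y))).append ((wk x).copy rfl hcomp).reverse)
    simp only [Walk.length_append, Walk.length_cons, Walk.length_reverse,
      Walk.length_copy] at hw
    simp only [hc]
    omega
  set X : Finset V := univ.filter fun v => c v = 0 with hX
  set Y : Finset V := univ.filter fun v => c v = 1 with hY
  have hmemX : ∀ v, v ∈ X ↔ c v = 0 := by intro v; simp [hX]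
  have hmemY : ∀ v, v ∈ Y ↔ c v = 1 := by intro v; simp [hY]
  have inner : ∀ (S : Finset V) (k : ℕ) (x : V), c x = k →
      (∀ v, v ∈ S ↔ c v ≠ k) → (∑ y ∈ S, if G.Adj x y then 1 else 0) = a := by
    intro S k x hcx hS
    rw [Finset.sum_subset (Finset.subset_univ S)]
    · rw [Finset.sum_boole]
      simpa using degree_eq_of_ncard' G hreg x
    · intro y _ hy
      simp only [ite_eq_right_iff]
      intro hadj
      exact absurd (hcx ▸ (not_not.mp ((hS y).not.mp hy))) (Ne.symm (key hadj))
  have hXa : (∑ x ∈ X, ∑ y ∈ Y, if G.Adj x y then 1 else 0) = a * X.card := by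
    rw [Finset.sum_congr rfl fun x hx => inner Y 0 x ((hmemX x).mp hx)
      (fun v => by rw [hmemY v]; rcases hc01 v with h | h <;> simp [h])]
    rw [Finset.sum_const, smul_eq_mul, mul_comm]
  have hYa : (∑ x ∈ X, ∑ y ∈ Y, if G.Adj x y then 1 else 0) = a * Y.card := by
    rw [Finset.sum_comm]
    rw [Finset.sum_congr rfl fun y hy => ?_, Finset.sum_const, smul_eq_mul, mul_comm]
    rw [show (∑ x ∈ X, if G.Adj x y then 1 else 0) = ∑ x ∈ X, if G.Adj y x then 1 else 0 from
      Finset.sum_congr rfl fun x _ => by rw [adj_comm]]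
    exact inner X 1 y ((hmemY y).mp hy)
      (fun v => by rw [hmemX v]; rcases hc01 v with h | h <;> simp [h])
  have hcards : X.card = Y.card := by
    have := hXa.symm.trans hYa
    exact Nat.eq_of_mul_eq_mul_left ha this
  have hXY : X.card + Y.card = Fintype.card V := by
    have hsplit := Finset.card_filter_add_card_filter_not
      (s := (univ : Finset V)) (p := fun v => c v = 0)
    have hflt : (univ.filter fun v => ¬ c v = 0) = Y := by
      show (univ.filter fun v => ¬ c v = 0) = univ.filter fun v => c v = 1
      apply Finset.filter_congr
      intro v _
      rcases hc01 v with h | h <;> simp [h]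
    rw [← Finset.card_univ, ← hsplit, hflt]
  omega

lemma false_of_oddWalk {V : Type*} [Fintype V] (G : SimpleGraph V) {a : ℕ}
    (hreg : ∀ v, (G.neighborSet v).ncard = a)
    (htf : ∀ x y z, G.Adj x y → G.Adj y z → G.Adj z x → False)
    (hodd : ∃ (x : V) (w : G.Walk x x), w.length % 2 = 1)
    (hlt : 2 * Fintype.card V < 5 * a) : False := by
  classical
  have hP : ∃ k, ∃ (x : V) (w : G.Walk x x), w.length = k ∧ k % 2 = 1 := by
    obtain ⟨x, w, hw⟩ := hodd
    exact ⟨w.length, x, w, rfl, hw⟩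
  set ℓ := Nat.find hP with hℓdef
  obtain ⟨u, w, hwl, hlodd⟩ := Nat.find_spec hP
  rw [← hℓdef] at hwl hlodd
  have hmin : ∀ (y : V) (q : G.Walk y y), q.length % 2 = 1 → ℓ ≤ q.length := by
    intro y q hq
    exact Nat.find_le ⟨y, q, rfl, hq⟩
  set f : ℕ → V := w.getVert with hf
  have hf0 : f 0 = u := w.getVert_zero
  have hfℓ : f ℓ = u := by rw [hf, ← hwl, w.getVert_length]
  have hne1 : ℓ ≠ 1 := by
    intro h1
    have hadj := w.adj_getVert_succ (i := 0) (by omega)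
    rw [show (0:ℕ) + 1 = 1 by rfl] at hadj
    rw [w.getVert_zero, ← hf, show (1:ℕ) = ℓ from h1.symm, hfℓ] at hadj
    exact G.irrefl hadj
  have hne3 : ℓ ≠ 3 := by
    intro h3
    have h01 := w.adj_getVert_succ (i := 0) (by omega)
    have h12 := w.adj_getVert_succ (i := 1) (by omega)
    have h23 := w.adj_getVert_succ (i := 2) (by omega)
    rw [show (2:ℕ) + 1 = 3 by rfl, show (3:ℕ) = ℓ from h3.symm, ← hf, hfℓ] at h23
    rw [w.getVert_zero] at h01
    exact htf u (w.getVert 1) (w.getVert 2) h01 h12 h23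
  have h5 : 5 ≤ ℓ := by omega
  have hinj : ∀ i j, i < j → j < ℓ → f i ≠ f j := by
    intro i j hij hj heq
    have e1 : i ≤ j := by omega
    have e2 : j ≤ ℓ := by omega
    have e3 : (0:ℕ) ≤ i := by omega
    have hA : ((w.seg i j e1).copy rfl heq.symm).length = j - i := by
      rw [Walk.length_copy, w.length_seg e1 (by omega)]
    have hB : ((((w.seg j ℓ e2).copy rfl hfℓ).append
        ((w.seg 0 i e3).copy hf0 rfl)).copy rfl heq).length = (ℓ - j) + i := by
      simp only [Walk.length_copy, Walk.length_append]
      rw [w.length_seg e2 (by omega), w.length_seg e3 (by omega)]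
      omega
    have hpar : (j - i) % 2 = 1 ∨ ((ℓ - j) + i) % 2 = 1 := by omega
    rcases hpar with hp | hp
    · have := hmin _ ((w.seg i j e1).copy rfl heq.symm) (by rw [hA]; exact hp)
      rw [hA] at this
      omega
    · have := hmin _ ((((w.seg j ℓ e2).copy rfl hfℓ).append
        ((w.seg 0 i e3).copy hf0 rfl)).copy rfl heq) (by rw [hB]; exact hp)
      rw [hB] at this
      omega
  have hgap : ∀ (v : V) (i j : ℕ), i < j → j < ℓ → G.Adj v (f i) → G.Adj v (f j) →
      (j - i = 2 ∨ j - i = ℓ - 2) := by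
    intro v i j hij hj hvi hvj
    have e1 : i ≤ j := by omega
    have e2 : j ≤ ℓ := by omega
    have e3 : (0:ℕ) ≤ i := by omega
    have hW1 : (Walk.cons hvi ((w.seg i j e1).append
        (Walk.cons hvj.symm Walk.nil))).length = (j - i) + 2 := by
      simp only [Walk.length_cons, Walk.length_append, Walk.length_nil]
      rw [w.length_seg e1 (by omega)]
      try omega
    have hW2 : (Walk.cons hvj (((w.seg j ℓ e2).copy rfl hfℓ).append
        (((w.seg 0 i e3).copy hf0 rfl).append
          (Walk.cons hvi.symm Walk.nil)))).length = (ℓ - j) + i + 2 := by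
      simp only [Walk.length_cons, Walk.length_append, Walk.length_nil, Walk.length_copy]
      rw [w.length_seg e2 (by omega), w.length_seg e3 (by omega)]
      try omega
    rcases Nat.even_or_odd (j - i) with hp | hp
    · rw [Nat.even_iff] at hp
      have := hmin _ (Walk.cons hvj (((w.seg j ℓ e2).copy rfl hfℓ).append
        (((w.seg 0 i e3).copy hf0 rfl).append
          (Walk.cons hvi.symm Walk.nil)))) (by rw [hW2]; omega)
      rw [hW2] at this
      omega
    · rw [Nat.odd_iff] at hp
      have := hmin _ (Walk.cons hvi ((w.seg i j e1).append
        (Walk.cons hvj.symm Walk.nil))) (by rw [hW1]; exact (by omega))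
      rw [hW1] at this
      omega
  have hdeg2 : ∀ v : V, ((Finset.range ℓ).filter fun i => G.Adj (f i) v).card ≤ 2 := by
    intro v
    by_contra hcon
    push_neg at hcon
    rw [Finset.two_lt_card_iff] at hcon
    obtain ⟨i, j, k, hi, hj, hk, hij, hik, hjk⟩ := hcon
    simp only [Finset.mem_filter, Finset.mem_range] at hi hj hk
    have tri : ∀ p q r : ℕ, p < q → q < r → r < ℓ → G.Adj v (f p) → G.Adj v (f q) →
        G.Adj v (f r) → False := by
      intro p q r h1 h2 h3 a1 a2 a3
      have g1 := hgap v p q h1 (by omega) a1 a2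
      have g2 := hgap v q r h2 h3 a2 a3
      have g3 := hgap v p r (by omega) h3 a1 a3
      omega
    rcases Nat.lt_trichotomy i j with h1 | h1 | h1
    · rcases Nat.lt_trichotomy j k with h2 | h2 | h2
      · exact tri i j k h1 h2 hk.1 hi.2.symm hj.2.symm hk.2.symm
      · exact hjk (by omega)
      · rcases Nat.lt_trichotomy i k with h3 | h3 | h3
        · exact tri i k j h3 h2 hj.1 hi.2.symm hk.2.symm hj.2.symm
        · exact hik (by omega)
        · exact tri k i j h3 h1 hj.1 hk.2.symm hi.2.symm hj.2.symm
    · exact hij (by omega)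
    · rcases Nat.lt_trichotomy i k with h2 | h2 | h2
      · exact tri j i k h1 h2 hk.1 hj.2.symm hi.2.symm hk.2.symm
      · exact hik (by omega)
      · rcases Nat.lt_trichotomy j k with h3 | h3 | h3
        · exact tri j k i h3 h2 hi.1 hj.2.symm hk.2.symm hi.2.symm
        · exact hjk (by omega)
        · exact tri k j i h3 h1 hi.1 hk.2.symm hj.2.symm hi.2.symm
  set R : Finset V := (Finset.range ℓ).image f with hR
  have hcardR : R.card = ℓ := by
    rw [hR, Finset.card_image_of_injOn, Finset.card_range]
    intro i hi j hj heq
    simp only [Finset.mem_coe, Finset.mem_range] at hi hj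
    by_contra hne
    rcases Nat.lt_or_ge i j with h | h
    · exact hinj i j h hj heq
    · exact hinj j i (by omega) hi heq.symm
  have count1 : (∑ r ∈ R, ∑ v ∈ (univ : Finset V), if G.Adj r v then 1 else 0) = ℓ * a := by
    rw [Finset.sum_congr rfl fun r _ => ?_, Finset.sum_const, smul_eq_mul, hcardR]
    rw [Finset.sum_boole]
    simpa using degree_eq_of_ncard' G hreg r
  have count2 : (∑ r ∈ R, ∑ v ∈ (univ : Finset V), if G.Adj r v then 1 else 0)
      ≤ 2 * Fintype.card V := by
    rw [Finset.sum_comm]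
    calc (∑ v ∈ (univ : Finset V), ∑ r ∈ R, if G.Adj r v then 1 else 0)
        ≤ ∑ v ∈ (univ : Finset V), 2 := by
          apply Finset.sum_le_sum
          intro v _
          rw [Finset.sum_boole]
          have himg : R.filter (fun r => G.Adj r v) =
              ((Finset.range ℓ).filter fun i => G.Adj (f i) v).image f := by
            rw [hR, Finset.filter_image]
          calc (R.filter (fun r => G.Adj r v)).card
              = (((Finset.range ℓ).filter fun i => G.Adj (f i) v).image f).card := by
                rw [himg]
            _ ≤ ((Finset.range ℓ).filter fun i => G.Adj (f i) v).card :=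
                Finset.card_image_le
            _ ≤ 2 := hdeg2 v
      _ = 2 * Fintype.card V := by rw [Finset.sum_const, smul_eq_mul, Finset.card_univ, mul_comm]
  have hle : ℓ * a ≤ 2 * Fintype.card V := count1 ▸ count2
  have h5a : 5 * a ≤ ℓ * a := Nat.mul_le_mul_right a h5
  omega

section Construction
variable (a b : ℕ)

/-- jumps for the light graph -/
def cJ : Finset (ZMod (a+b+2)) :=
  ((range (a/2)).image fun k => ((2*k+1 : ℕ) : ZMod (a+b+2))) ∪
  ((range (a/2)).image fun k => -((2*k+1 : ℕ) : ZMod (a+b+2)))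

/-- the midpoint element -/
def cM : ZMod (a+b+2) := (((a+b)/2 + 1 : ℕ) : ZMod (a+b+2))

/-- jumps for the heavy graph -/
noncomputable def cK : Finset (ZMod (a+b+2)) :=
  haveI : NeZero (a+b+2) := ⟨by omega⟩
  Finset.univ \ (insert 0 (insert (cM a b) (cJ a b)))

/-- the light graph -/
def cL : SimpleGraph (ZMod (a+b+2)) where
  Adj x y := (y - x ∈ cJ a b ∨ x - y ∈ cJ a b) ∧ x ≠ y
  symm := ⟨by intro x y ⟨h, hne⟩; exact ⟨h.symm, hne.symm⟩⟩
  loopless := ⟨by intro x ⟨h, hne⟩; exact hne rfl⟩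

/-- the heavy graph -/
noncomputable def cH : SimpleGraph (ZMod (a+b+2)) where
  Adj x y := (y - x ∈ cK a b ∨ x - y ∈ cK a b) ∧ x ≠ y
  symm := ⟨by intro x y ⟨h, hne⟩; exact ⟨h.symm, hne.symm⟩⟩
  loopless := ⟨by intro x ⟨h, hne⟩; exact hne rfl⟩

variable {a b : ℕ} (ha : 3 ≤ a) (hab : a ≤ b) (hae : a % 2 = 0) (hbe : b % 2 = 0)

include ha hab hae in
lemma cJ_card : (cJ a b).card = a := by
  haveI : NeZero (a+b+2) := ⟨by omega⟩
  have hinj1 : ∀ k1 ∈ range (a/2), ∀ k2 ∈ range (a/2),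
      ((2*k1+1 : ℕ) : ZMod (a+b+2)) = ((2*k2+1 : ℕ) : ZMod (a+b+2)) → k1 = k2 := by
    intro k1 h1 k2 h2 heq
    rw [mem_range] at h1 h2
    have := congrArg ZMod.val heq
    rw [ZMod.val_cast_of_lt (by omega), ZMod.val_cast_of_lt (by omega)] at this
    omega
  have hc1 : (((range (a/2)).image fun k => ((2*k+1 : ℕ) : ZMod (a+b+2)))).card = a/2 := by
    rw [Finset.card_image_of_injOn fun k1 h1 k2 h2 heq => hinj1 k1 h1 k2 h2 heq, card_range]
  have hc2 : (((range (a/2)).image fun k => -((2*k+1 : ℕ) : ZMod (a+b+2)))).card = a/2 := by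
    rw [Finset.card_image_of_injOn, card_range]
    intro k1 h1 k2 h2 heq
    exact hinj1 k1 h1 k2 h2 (neg_injective heq)
  have hdisj : Disjoint ((range (a/2)).image fun k => ((2*k+1 : ℕ) : ZMod (a+b+2)))
      ((range (a/2)).image fun k => -((2*k+1 : ℕ) : ZMod (a+b+2))) := by
    rw [Finset.disjoint_left]
    rintro z hz1 hz2
    simp only [Finset.mem_image, mem_range] at hz1 hz2
    obtain ⟨k1, hk1, he1⟩ := hz1
    obtain ⟨k2, hk2, he2⟩ := hz2
    have hz : ((2*k1+1 : ℕ) : ZMod (a+b+2)) + ((2*k2+1 : ℕ) : ZMod (a+b+2)) = 0 := by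
      rw [he1, ← he2]; ring
    rw [← Nat.cast_add, ZMod.natCast_eq_zero_iff] at hz
    have hle := Nat.le_of_dvd (by omega) hz
    omega
  rw [cJ, Finset.card_union_of_disjoint hdisj, hc1, hc2]
  omega

lemma cJ_neg {z : ZMod (a+b+2)} (hz : z ∈ cJ a b) : -z ∈ cJ a b := by
  rw [cJ, Finset.mem_union] at hz ⊢
  rcases hz with h | h
  · right
    simp only [Finset.mem_image, mem_range] at h ⊢
    obtain ⟨k, hk, he⟩ := h
    exact ⟨k, hk, by rw [he]⟩
  · left
    simp only [Finset.mem_image, mem_range] at h ⊢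
    obtain ⟨k, hk, he⟩ := h
    exact ⟨k, hk, by rw [← he, neg_neg]⟩

include ha hab in
lemma cJ_zero : (0 : ZMod (a+b+2)) ∉ cJ a b := by
  haveI : NeZero (a+b+2) := ⟨by omega⟩
  intro h
  rw [cJ, Finset.mem_union] at h
  have : ∀ k, k < a/2 → ((2*k+1 : ℕ) : ZMod (a+b+2)) ≠ 0 := by
    intro k hk he
    rw [ZMod.natCast_eq_zero_iff] at he
    have := Nat.le_of_dvd (by omega) he
    omega
  rcases h with h | h <;> simp only [Finset.mem_image, mem_range] at h <;>
    obtain ⟨k, hk, he⟩ := h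
  · exact this k hk he
  · exact this k hk (by rw [← neg_eq_zero, he])

include hae hbe in
lemma cJ_odd {z : ZMod (a+b+2)} (hz : z ∈ cJ a b) :
    ZMod.castHom (show (2:ℕ) ∣ (a+b+2) by omega) (ZMod 2) z = 1 := by
  rw [cJ, Finset.mem_union] at hz
  have key : ∀ k : ℕ, (ZMod.castHom (show (2:ℕ) ∣ (a+b+2) by omega) (ZMod 2))
      ((2*k+1 : ℕ) : ZMod (a+b+2)) = 1 := by
    intro k
    rw [map_natCast]
    push_cast
    rw [show ((2:ZMod 2)) = 0 by decide]
    ring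
  rcases hz with h | h <;> simp only [Finset.mem_image, mem_range] at h <;>
      obtain ⟨k, hk, he⟩ := h <;> rw [← he]
  · exact key k
  · rw [map_neg, key k]; decide

include hae hbe in
lemma cM_add_self : cM a b + cM a b = 0 := by
  haveI : NeZero (a+b+2) := ⟨by omega⟩
  rw [cM, ← Nat.cast_add, show (a+b)/2 + 1 + ((a+b)/2 + 1) = a + b + 2 by omega,
    ZMod.natCast_self]

include ha hab hae hbe in
lemma cM_not_mem : cM a b ∉ cJ a b := by
  haveI : NeZero (a+b+2) := ⟨by omega⟩
  intro h
  rw [cJ, Finset.mem_union] at h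
  rcases h with h | h <;> simp only [Finset.mem_image, mem_range] at h <;>
      obtain ⟨k, hk, he⟩ := h
  · have := congrArg ZMod.val he
    rw [ZMod.val_cast_of_lt (by omega), cM, ZMod.val_cast_of_lt (by omega)] at this
    omega
  · have : ((2*k+1 : ℕ) : ZMod (a+b+2)) + (((a+b)/2 + 1 : ℕ) : ZMod (a+b+2)) = 0 := by
      rw [show (((a+b)/2 + 1 : ℕ) : ZMod (a+b+2)) = cM a b from rfl, ← he]; ring
    rw [← Nat.cast_add, ZMod.natCast_eq_zero_iff] at this
    have := Nat.le_of_dvd (by omega) this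
    omega

include ha hab in
lemma cM_ne_zero : cM a b ≠ 0 := by
  haveI : NeZero (a+b+2) := ⟨by omega⟩
  rw [cM, Ne, ZMod.natCast_eq_zero_iff]
  intro h
  have := Nat.le_of_dvd (by omega) h
  omega

include ha hab hae hbe in
lemma cK_card : (cK a b).card = b := by
  haveI : NeZero (a+b+2) := ⟨by omega⟩
  rw [cK, Finset.card_sdiff_of_subset (Finset.subset_univ _), Finset.card_insert_of_notMem,
    Finset.card_insert_of_notMem (cM_not_mem ha hab hae hbe), cJ_card ha hab hae]
  · rw [Finset.card_univ, ZMod.card]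
    omega
  · simp only [Finset.mem_insert]
    push_neg
    exact ⟨(cM_ne_zero ha hab).symm, cJ_zero ha hab⟩

lemma cK_not_cJ {z : ZMod (a+b+2)} (hz : z ∈ cK a b) : z ∉ cJ a b := by
  haveI : NeZero (a+b+2) := ⟨by omega⟩
  rw [cK, Finset.mem_sdiff] at hz
  simp only [Finset.mem_insert] at hz
  tauto

lemma cK_ne_zero' {z : ZMod (a+b+2)} (hz : z ∈ cK a b) : z ≠ 0 := by
  haveI : NeZero (a+b+2) := ⟨by omega⟩
  rw [cK, Finset.mem_sdiff] at hz
  simp only [Finset.mem_insert] at hz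
  tauto

include hae hbe in
lemma cK_neg {z : ZMod (a+b+2)} (hz : z ∈ cK a b) : -z ∈ cK a b := by
  haveI : NeZero (a+b+2) := ⟨by omega⟩
  rw [cK, Finset.mem_sdiff] at hz ⊢
  simp only [Finset.mem_insert] at hz ⊢
  refine ⟨Finset.mem_univ _, ?_⟩
  push_neg at hz ⊢
  obtain ⟨-, h0, hm, hJ⟩ := hz
  refine ⟨by simpa using h0, ?_, ?_⟩
  · intro he
    apply hm
    have : z = - cM a b := by rw [← he, neg_neg]
    rw [this, neg_eq_iff_add_eq_zero, cM_add_self hae hbe]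
  · intro hn
    exact hJ (by simpa using cJ_neg hn)


include ha hab in
lemma cL_adj {x y : ZMod (a+b+2)} : (cL a b).Adj x y ↔ y - x ∈ cJ a b := by
  constructor
  · rintro ⟨h | h, hne⟩
    · exact h
    · have := cJ_neg h
      rwa [neg_sub] at this
  · intro h
    refine ⟨Or.inl h, ?_⟩
    rintro rfl
    rw [sub_self] at h
    exact cJ_zero ha hab h

include ha hab hae hbe in
lemma cH_adj {x y : ZMod (a+b+2)} : (cH a b).Adj x y ↔ y - x ∈ cK a b := by
  constructor
  · rintro ⟨h | h, hne⟩
    · exact h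
    · have := cK_neg hae hbe h
      rwa [neg_sub] at this
  · intro h
    refine ⟨Or.inl h, ?_⟩
    rintro rfl
    rw [sub_self] at h
    exact cK_ne_zero' h rfl

include ha hab hae in
lemma cL_reg (v : ZMod (a+b+2)) : ((cL a b).neighborSet v).ncard = a := by
  have hset : (cL a b).neighborSet v = ↑((cJ a b).image (v + ·)) := by
    ext y
    simp only [mem_neighborSet, cL_adj ha hab, Finset.coe_image, Set.mem_image, Finset.mem_coe]
    constructor
    · intro h
      exact ⟨y - v, h, by ring⟩
    · rintro ⟨j, hj, rfl⟩
      simpa using hj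
  rw [hset, Set.ncard_coe_finset,
    Finset.card_image_of_injective _ (fun x y h => by exact add_left_cancel h),
    cJ_card ha hab hae]

include ha hab hae hbe in
lemma cH_reg (v : ZMod (a+b+2)) : ((cH a b).neighborSet v).ncard = b := by
  have hset : (cH a b).neighborSet v = ↑((cK a b).image (v + ·)) := by
    ext y
    simp only [mem_neighborSet, cH_adj ha hab hae hbe, Finset.coe_image, Set.mem_image,
      Finset.mem_coe]
    constructor
    · intro h
      exact ⟨y - v, h, by ring⟩
    · rintro ⟨j, hj, rfl⟩
      simpa using hj
  rw [hset, Set.ncard_coe_finset,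
    Finset.card_image_of_injective _ (fun x y h => by exact add_left_cancel h),
    cK_card ha hab hae hbe]

include ha hab hae hbe in
lemma cLH_disjoint : Disjoint (cL a b) (cH a b) := by
  rw [disjoint_iff]
  ext x y
  simp only [inf_adj, bot_adj, iff_false, not_and]
  intro h1 h2
  rw [cL_adj ha hab] at h1
  rw [cH_adj ha hab hae hbe] at h2
  exact cK_not_cJ h2 h1

include ha hab hae hbe in
lemma cL_parity {x y : ZMod (a+b+2)} (h : (cL a b).Adj x y) :
    ZMod.castHom (show (2:ℕ) ∣ (a+b+2) by omega) (ZMod 2) x ≠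
    ZMod.castHom (show (2:ℕ) ∣ (a+b+2) by omega) (ZMod 2) y := by
  rw [cL_adj ha hab] at h
  have := cJ_odd hae hbe h
  rw [map_sub] at this
  intro he
  rw [he] at this
  simp at this

include ha hab hae hbe in
lemma cL_tf : ∀ x y z : ZMod (a+b+2),
    (cL a b).Adj x y → (cL a b).Adj y z → (cL a b).Adj z x → False := by
  intro x y z h1 h2 h3
  have p1 := cL_parity ha hab hae hbe h1
  have p2 := cL_parity ha hab hae hbe h2
  have p3 := cL_parity ha hab hae hbe h3
  revert p1 p2 p3
  generalize ZMod.castHom (show (2:ℕ) ∣ (a+b+2) by omega) (ZMod 2) x = p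
  generalize ZMod.castHom (show (2:ℕ) ∣ (a+b+2) by omega) (ZMod 2) y = q
  generalize ZMod.castHom (show (2:ℕ) ∣ (a+b+2) by omega) (ZMod 2) z = r
  revert p q r
  decide

include ha hab hae hbe in
lemma construction_exists' : ∃ L H : SimpleGraph (ZMod (a+b+2)), IsWGraph L H a b 4 := by
  haveI : NeZero (a+b+2) := ⟨by omega⟩
  set v0 : ZMod (a+b+2) := ((0:ℕ) : ZMod (a+b+2)) with hv0
  set v1 : ZMod (a+b+2) := ((1:ℕ) : ZMod (a+b+2)) with hv1
  set v4 : ZMod (a+b+2) := ((4:ℕ) : ZMod (a+b+2)) with hv4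
  set v3 : ZMod (a+b+2) := ((3:ℕ) : ZMod (a+b+2)) with hv3
  have hne : ∀ i j : ℕ, i < a+b+2 → j < a+b+2 → i ≠ j →
      ((i : ℕ) : ZMod (a+b+2)) ≠ ((j : ℕ) : ZMod (a+b+2)) := by
    intro i j hi hj hij he
    exact hij (by rw [← ZMod.val_cast_of_lt hi, ← ZMod.val_cast_of_lt hj, he])
  have h1J : ((1:ℕ) : ZMod (a+b+2)) ∈ cJ a b := by
    rw [cJ, Finset.mem_union]
    left
    simp only [Finset.mem_image, Finset.mem_range]
    exact ⟨0, by omega, by norm_num⟩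
  have h3J : ((3:ℕ) : ZMod (a+b+2)) ∈ cJ a b := by
    rw [cJ, Finset.mem_union]
    left
    simp only [Finset.mem_image, Finset.mem_range]
    exact ⟨1, by omega, by norm_num⟩
  have a01 : (cL a b).Adj v0 v1 := by
    rw [cL_adj ha hab, show v1 - v0 = ((1:ℕ) : ZMod (a+b+2)) by
      rw [hv0, hv1]; push_cast; ring]
    exact h1J
  have a14 : (cL a b).Adj v1 v4 := by
    rw [cL_adj ha hab, show v4 - v1 = ((3:ℕ) : ZMod (a+b+2)) by
      rw [hv4, hv1]; push_cast; norm_num]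
    exact h3J
  have a43 : (cL a b).Adj v4 v3 := by
    rw [cL_adj ha hab, show v3 - v4 = -((1:ℕ) : ZMod (a+b+2)) by
      rw [hv4, hv3]; push_cast; norm_num]
    exact cJ_neg h1J
  have a30 : (cL a b).Adj v3 v0 := by
    rw [cL_adj ha hab, show v0 - v3 = -((3:ℕ) : ZMod (a+b+2)) by
      rw [hv0, hv3]; push_cast; norm_num]
    exact cJ_neg h3J
  have A01 : (cL a b ⊔ cH a b).Adj v0 v1 := Or.inl a01
  have A14 : (cL a b ⊔ cH a b).Adj v1 v4 := Or.inl a14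
  have A43 : (cL a b ⊔ cH a b).Adj v4 v3 := Or.inl a43
  have A30 : (cL a b ⊔ cH a b).Adj v3 v0 := Or.inl a30
  have hcyc := isCycle_quad A01 A14 A43 A30
    (hne 0 4 (by omega) (by omega) (by omega)) (hne 1 3 (by omega) (by omega) (by omega))
  refine ⟨cL a b, cH a b, cLH_disjoint ha hab hae hbe, cL_reg ha hab hae,
    cH_reg ha hab hae hbe, ⟨v0, _, hcyc, ?_⟩, ?_⟩
  · rw [wWeight]
    simp only [Walk.edges_cons, Walk.edges_nil, List.map_cons, List.map_nil,
      List.sum_cons, List.sum_nil]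
    rw [lightIte_pos _ ((cL a b).mem_edgeSet.mpr a01),
      lightIte_pos _ ((cL a b).mem_edgeSet.mpr a14),
      lightIte_pos _ ((cL a b).mem_edgeSet.mpr a43),
      lightIte_pos _ ((cL a b).mem_edgeSet.mpr a30)]
    norm_num
  · intro u w hc
    have hlen := hc.three_le_length
    have hge := wWeight_ge_length _ _ w
    rcases Nat.lt_or_ge w.length 4 with h4 | h4
    · have h3 : w.length = 3 := by omega
      obtain ⟨x, y, g1, g2, g3, hedges⟩ := length3_walk w h3
      rw [wWeight, hedges]
      simp only [List.map_cons, List.map_nil, List.sum_cons, List.sum_nil]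
      split_ifs with e1 e2 e3 <;> try omega
      exact (cL_tf ha hab hae hbe u x y ((cL a b).mem_edgeSet.mp e1)
        ((cL a b).mem_edgeSet.mp e2) ((cL a b).mem_edgeSet.mp e3)).elim
    · omega

include ha hab hae hbe in
lemma construction_exists : ∃ L H : SimpleGraph (Fin (a+b+2)), IsWGraph L H a b 4 :=
  construction_exists' ha hab hae hbe

end Construction

/-- For `3 ≤ a ≤ b` both even with `b ≤ 3a/2 - 2`, every `(a,b)`-regular
weighted graph of girth 4 has at least `a+b+2` vertices, and this bound is
attained; hence `n(a,b,4) = a+b+2`. -/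
theorem stmt_15 (a b : ℕ) (ha : 3 ≤ a) (hab : a ≤ b)
    (hae : a % 2 = 0) (hbe : b % 2 = 0) (hsmall : b ≤ 3 * a / 2 - 2) :
    IsLeast {n : ℕ | ∃ L H : SimpleGraph (Fin n), IsWGraph L H a b 4}
      (a + b + 2) := by
  constructor
  · exact construction_exists ha hab hae hbe
  · intro n hn
    obtain ⟨L, H, hdis, hLreg, hHreg, ⟨u0, w0, hw0c, hw0w⟩, hgirth⟩ := hn
    classical
    have htf : ∀ x y z : Fin n, L.Adj x y → L.Adj y z → L.Adj z x → False := by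
      intro x y z h1 h2 h3
      have h1' : (L ⊔ H).Adj x y := Or.inl h1
      have h2' : (L ⊔ H).Adj y z := Or.inl h2
      have h3' : (L ⊔ H).Adj z x := Or.inl h3
      have hbound := hgirth x _ (isCycle_triangle h1' h2' h3')
      rw [wWeight] at hbound
      simp only [Walk.edges_cons, Walk.edges_nil, List.map_cons, List.map_nil,
        List.sum_cons, List.sum_nil] at hbound
      rw [lightIte_pos _ (L.mem_edgeSet.mpr h1), lightIte_pos _ (L.mem_edgeSet.mpr h2),
        lightIte_pos _ (L.mem_edgeSet.mpr h3)] at hbound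
      omega
    have hcard1 : a + b + 1 ≤ n := by
      have hNL : (L.neighborSet u0).toFinset.card = a := by
        rw [← Set.ncard_eq_toFinset_card']; exact hLreg u0
      have hNH : (H.neighborSet u0).toFinset.card = b := by
        rw [← Set.ncard_eq_toFinset_card']; exact hHreg u0
      have hdisj : Disjoint (L.neighborSet u0).toFinset (H.neighborSet u0).toFinset := by
        rw [Finset.disjoint_left]
        intro x hx1 hx2
        rw [Set.mem_toFinset] at hx1 hx2
        simpa using hdis.le_bot ⟨hx1, hx2⟩
      have hu0 : u0 ∉ (L.neighborSet u0).toFinset ∪ (H.neighborSet u0).toFinset := by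
        rw [Finset.mem_union, Set.mem_toFinset, Set.mem_toFinset]
        push_neg
        exact ⟨fun h => L.irrefl h, fun h => H.irrefl h⟩
      have hcle := Finset.card_le_card (Finset.subset_univ
        (insert u0 ((L.neighborSet u0).toFinset ∪ (H.neighborSet u0).toFinset)))
      rw [Finset.card_insert_of_notMem hu0, Finset.card_union_of_disjoint hdisj, hNL, hNH,
        Finset.card_univ, Fintype.card_fin] at hcle
      omega
    rcases Nat.lt_or_ge n (a+b+2) with hlt | hge
    · exfalso
      have hn' : n = a + b + 1 := by omega
      have h2n5a : 2 * Fintype.card (Fin n) < 5 * a := by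
        rw [Fintype.card_fin]; omega
      by_cases hoc : ∃ (x : Fin n) (q : L.Walk x x), q.length % 2 = 1
      · exact false_of_oddWalk L hLreg htf hoc h2n5a
      · push_neg at hoc
        have hno : ∀ (x : Fin n) (q : L.Walk x x), q.length % 2 = 0 := by
          intro x q
          have := hoc x q
          omega
        have hecard := even_card_of_no_oddWalk L (show 0 < a by omega) hLreg hno
        rw [Fintype.card_fin] at hecard
        omega
    · exact hge
end

section
/- For every even integer b with b ≥ 2, the minimum order of a weighted graph G = (L,H) with L 1-regular, H b-regular, disjoint edge sets, and girth 5 (minimum cycle weight 5 with L-edges weight 1, H-edges weight 2) is exactly b + 2. -/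
/-! ### Auxiliary lemmas -/

lemma edge_unique' {V : Type*} {L : SimpleGraph V}
    (hL : ∀ x y z : V, L.Adj x y → L.Adj x z → y = z)
    {e f : Sym2 V} (he : e ∈ L.edgeSet) (hf : f ∈ L.edgeSet)
    {x : V} (hxe : x ∈ e) (hxf : x ∈ f) : e = f := by
  obtain ⟨y, rfl⟩ := Sym2.mem_iff_exists.mp hxe
  obtain ⟨z, rfl⟩ := Sym2.mem_iff_exists.mp hxf
  rw [SimpleGraph.mem_edgeSet] at he hf
  rw [hL x y z he hf]

lemma mem_support_of_mem_edges' {V : Type*} {G : SimpleGraph V} {a b : V}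
    (w : G.Walk a b) {e : Sym2 V} {x : V} (he : e ∈ w.edges) (hx : x ∈ e) :
    x ∈ w.support := by
  obtain ⟨y, rfl⟩ := Sym2.mem_iff_exists.mp hx
  exact w.fst_mem_support_of_mem_edges he

/-- Pairwise-disjoint edges of a matching contained in a vertex set `T`:
`2 * (number of edges) ≤ |T|`. -/
lemma two_mul_card_le' {V : Type*} (L : SimpleGraph V)
    (hL : ∀ x y z : V, L.Adj x y → L.Adj x z → y = z)
    (S : Finset (Sym2 V)) (T : Finset V)
    (hSL : ∀ e ∈ S, e ∈ L.edgeSet)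
    (hST : ∀ e ∈ S, ∀ x ∈ e, x ∈ T) : 2 * S.card ≤ T.card := by
  classical
  have key : (S ×ˢ (Finset.univ : Finset Bool)).card ≤ T.card := by
    apply Finset.card_le_card_of_injOn (fun x => if x.2 then x.1.out.1 else x.1.out.2)
    · rintro ⟨e, c⟩ hec
      have he : e ∈ S := by simpa using hec
      cases c <;> simp only [if_true, if_false]
      · exact hST e he _ (Sym2.out_snd_mem e)
      · exact hST e he _ (Sym2.out_fst_mem e)
    · rintro ⟨e, c⟩ hec ⟨f, d⟩ hfd hef
      have he : e ∈ S := by simpa using hec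
      have hf : f ∈ S := by simpa using hfd
      simp only at hef
      have hx : ∃ x : V, x ∈ e ∧ x ∈ f := by
        refine ⟨if c then e.out.1 else e.out.2, ?_, ?_⟩
        · cases c <;> simp [Sym2.out_fst_mem, Sym2.out_snd_mem]
        · rw [hef]; cases d <;> simp [Sym2.out_fst_mem, Sym2.out_snd_mem]
      obtain ⟨x, hxe, hxf⟩ := hx
      have hefeq : e = f := edge_unique' hL (hSL e he) (hSL f hf) hxe hxf
      subst hefeq
      have hdiag : ¬ e.IsDiag := L.not_isDiag_of_mem_edgeSet (hSL e he)
      have hout : e.out.1 ≠ e.out.2 := by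
        intro h
        apply hdiag
        have h1 : Sym2.IsDiag (Quot.mk (Sym2.Rel V) e.out : Sym2 V) ↔ e.out.1 = e.out.2 := Sym2.isDiag_iff_proj_eq
        have h2 : (Quot.mk (Sym2.Rel V) e.out : Sym2 V) = e := Quot.out_eq e
        rw [h2] at h1
        exact h1.mpr h
      refine Prod.ext rfl ?_
      by_contra hcd
      cases c <;> cases d <;> simp_all
  calc 2 * S.card = (S ×ˢ (Finset.univ : Finset Bool)).card := by
        rw [Finset.card_product]; simp [mul_comm]
    _ ≤ T.card := key

open Classical in
/-- If `L` is a matching, every cycle in `L ⊔ H` has weight at least 5. -/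
lemma wWeight_ge' {V : Type*} (L H : SimpleGraph V)
    (hL : ∀ x y z : V, L.Adj x y → L.Adj x z → y = z) {u : V}
    (w : (L ⊔ H).Walk u u) (hw : w.IsCycle) : 5 ≤ wWeight L H w := by
  classical
  have hnodup : w.edges.Nodup := hw.edges_nodup
  have hlen3 : 3 ≤ w.length := hw.three_le_length
  set E : Finset (Sym2 V) := w.edges.toFinset with hE
  have hcardE : E.card = w.length := by
    rw [hE, List.toFinset_card_of_nodup hnodup, SimpleGraph.Walk.length_edges]
  set S : Finset (Sym2 V) := E.filter (· ∈ L.edgeSet) with hS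
  have hsum : wWeight L H w = S.card + 2 * (E.card - S.card) := by
    have h1 : wWeight L H w = ∑ e ∈ E, (if e ∈ L.edgeSet then 1 else 2) := by
      rw [wWeight, hE, List.sum_toFinset _ hnodup]
    rw [h1, ← Finset.sum_filter_add_sum_filter_not E (· ∈ L.edgeSet)]
    have h2 : ∑ e ∈ E.filter (· ∈ L.edgeSet), (if e ∈ L.edgeSet then 1 else 2) = S.card := by
      rw [Finset.sum_ite_of_true, Finset.sum_const, smul_eq_mul, mul_one]
      intro e he; exact (Finset.mem_filter.mp he).2
    have h3 : ∑ e ∈ E.filter (¬ · ∈ L.edgeSet), (if e ∈ L.edgeSet then 1 else 2)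
        = 2 * (E.card - S.card) := by
      rw [Finset.sum_ite_of_false, Finset.sum_const, smul_eq_mul, mul_comm]
      · congr 1
        rw [hS, Finset.filter_not, Finset.card_sdiff_of_subset (Finset.filter_subset _ _)]
      · intro e he; exact (Finset.mem_filter.mp he).2
    rw [h2, h3]
  have hScard : S.card ≤ E.card := Finset.card_le_card (Finset.filter_subset _ _)
  have hbound : 2 * S.card ≤ w.length := by
    cases w with
    | nil => simp at hw
    | cons h p =>
      have hT : p.support.toFinset.card ≤ p.length + 1 := by
        calc p.support.toFinset.card ≤ p.support.length := p.support.toFinset_card_le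
          _ = p.length + 1 := p.length_support
      have := two_mul_card_le' L hL S p.support.toFinset
        (fun e he => (Finset.mem_filter.mp he).2)
        (fun e he x hx => by
          have heE : e ∈ (SimpleGraph.Walk.cons h p).edges := by
            have := (Finset.mem_filter.mp he).1
            rwa [hE, List.mem_toFinset] at this
          have hxs : x ∈ (SimpleGraph.Walk.cons h p).support :=
            mem_support_of_mem_edges' _ heE hx
          rw [SimpleGraph.Walk.support_cons, List.mem_cons] at hxs
          rw [List.mem_toFinset]
          rcases hxs with rfl | hxs
          · exact p.end_mem_support
          · exact hxs)
      calc 2 * S.card ≤ p.support.toFinset.card := this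
        _ ≤ p.length + 1 := hT
        _ = (SimpleGraph.Walk.cons h p).length := by simp
  rw [hsum, hcardE] at *
  omega

/-- Lower bound: regularity plus disjointness force at least `b + 2` vertices. -/
lemma lower_bound' {n b : ℕ} (L H : SimpleGraph (Fin n)) (u : Fin n)
    (hdisj : Disjoint L H)
    (hLreg : (L.neighborSet u).ncard = 1)
    (hHreg : (H.neighborSet u).ncard = b) : b + 2 ≤ n := by
  classical
  have hn1 : 1 ≤ n := by
    rcases Nat.eq_zero_or_pos n with h | h
    · exact absurd u.isLt (by omega)
    · exact h
  have hsub : H.neighborSet u ⊆ ({u} : Set (Fin n))ᶜ := by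
    intro v hv
    simp only [Set.mem_compl_iff, Set.mem_singleton_iff]
    exact fun h => H.irrefl (h ▸ hv)
  have hcompl : (({u} : Set (Fin n))ᶜ).ncard = n - 1 := by
    rw [Set.ncard_eq_toFinset_card', Set.toFinset_compl, Set.toFinset_singleton,
      Finset.card_compl, Finset.card_singleton, Fintype.card_fin]
  have hle : b ≤ n - 1 := by
    have := Set.ncard_le_ncard hsub (Set.toFinite _)
    rwa [hHreg, hcompl] at this
  by_contra hcon
  push_neg at hcon
  have hn : n = b + 1 := by omega
  have heq : H.neighborSet u = ({u} : Set (Fin n))ᶜ := by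
    apply Set.eq_of_subset_of_ncard_le hsub _ (Set.toFinite _)
    rw [hHreg, hcompl, hn]; omega
  obtain ⟨v, hv⟩ := Set.ncard_eq_one.mp hLreg
  have hvL : L.Adj u v := by
    have : v ∈ L.neighborSet u := hv ▸ rfl
    exact this
  have hvH : H.Adj u v := by
    have : v ∈ ({u} : Set (Fin n))ᶜ := by
      simp only [Set.mem_compl_iff, Set.mem_singleton_iff]
      exact fun h => L.irrefl (h ▸ hvL)
    rw [← heq] at this
    exact this
  have : (L ⊓ H).Adj u v := ⟨hvL, hvH⟩
  rw [disjoint_iff.mp hdisj] at this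
  exact this

/-! ### The extremal construction: a perfect matching and its complement -/

/-- The perfect matching on `Fin n` (for even `n`) pairing `2i` with `2i+1`. -/
def Lg (n : ℕ) : SimpleGraph (Fin n) where
  Adj x y := (x : ℕ) / 2 = (y : ℕ) / 2 ∧ x ≠ y
  symm := ⟨by intro x y ⟨h1, h2⟩; exact ⟨h1.symm, h2.symm⟩⟩
  loopless := ⟨by intro x ⟨h1, h2⟩; exact h2 rfl⟩

lemma Lg_unique {n : ℕ} : ∀ x y z : Fin n, (Lg n).Adj x y → (Lg n).Adj x z → y = z := by
  rintro x y z ⟨h1, h2⟩ ⟨h3, h4⟩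
  have h2' : (x : ℕ) ≠ (y : ℕ) := fun h => h2 (Fin.ext h)
  have h4' : (x : ℕ) ≠ (z : ℕ) := fun h => h4 (Fin.ext h)
  exact Fin.ext (by omega)

lemma Lg_nbr {n : ℕ} (hn : n % 2 = 0) (v : Fin n) :
    (Lg n).neighborSet v = {⟨2 * ((v : ℕ) / 2) + (1 - (v : ℕ) % 2), by omega⟩} := by
  ext x
  have hv := v.isLt
  have hx := x.isLt
  simp only [SimpleGraph.mem_neighborSet, Set.mem_singleton_iff, Lg, ne_eq, Fin.ext_iff]
  omega

lemma Lg_nbr_card {n : ℕ} (hn : n % 2 = 0) (v : Fin n) :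
    ((Lg n).neighborSet v).ncard = 1 := by
  rw [Lg_nbr hn v, Set.ncard_singleton]

lemma Lg_compl_nbr_card {n : ℕ} (hn : n % 2 = 0) (v : Fin n) :
    (((Lg n)ᶜ).neighborSet v).ncard = n - 2 := by
  classical
  set fv : Fin n := ⟨2 * ((v : ℕ) / 2) + (1 - (v : ℕ) % 2), by omega⟩ with hfv
  have hvfv : v ≠ fv := by
    simp only [hfv, ne_eq, Fin.ext_iff]
    omega
  have heq : ((Lg n)ᶜ).neighborSet v = (↑({v, fv} : Finset (Fin n)) : Set (Fin n))ᶜ := by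
    ext x
    have hv := v.isLt
    have hx := x.isLt
    simp only [SimpleGraph.mem_neighborSet, SimpleGraph.compl_adj, Lg, Set.mem_compl_iff,
      Finset.coe_insert, Finset.coe_singleton, Set.mem_insert_iff, Set.mem_singleton_iff,
      not_or, not_and, ne_eq, Fin.ext_iff, hfv]
    omega
  rw [heq, ← Finset.coe_compl, Set.ncard_coe_finset, Finset.card_compl, Fintype.card_fin,
    Finset.card_insert_of_notMem (by simpa using hvfv), Finset.card_singleton]

lemma sup_compl_adj' {n : ℕ} {x y : Fin n} (h : x ≠ y) :
    (Lg n ⊔ (Lg n)ᶜ).Adj x y := by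
  rw [SimpleGraph.sup_adj]
  by_cases hL : (Lg n).Adj x y
  · exact Or.inl hL
  · exact Or.inr ⟨h, hL⟩

lemma exists_cycle5 {n : ℕ} (hn4 : 4 ≤ n) (hn : n % 2 = 0) :
    ∃ (u : Fin n) (w : (Lg n ⊔ (Lg n)ᶜ).Walk u u), w.IsCycle ∧ wWeight (Lg n) ((Lg n)ᶜ) w = 5 := by
  classical
  set v0 : Fin n := ⟨0, by omega⟩ with hv0
  set v1 : Fin n := ⟨1, by omega⟩ with hv1
  set v2 : Fin n := ⟨2, by omega⟩ with hv2
  have h01 : v0 ≠ v1 := by simp [hv0, hv1, Fin.ext_iff]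
  have h12 : v1 ≠ v2 := by simp [hv1, hv2, Fin.ext_iff]
  have h20 : v2 ≠ v0 := by simp [hv2, hv0, Fin.ext_iff]
  have a01 := sup_compl_adj' h01
  have a12 := sup_compl_adj' h12
  have a20 := sup_compl_adj' h20
  refine ⟨v0, .cons a01 (.cons a12 (.cons a20 .nil)), ?_, ?_⟩
  · constructor
    · constructor
      · constructor
        simp [Sym2.mk_eq_mk_iff, Prod.ext_iff, hv0, hv1, hv2, Fin.ext_iff]
      · simp
    · simp only [SimpleGraph.Walk.support_cons, SimpleGraph.Walk.support_nil, List.tail_cons]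
      simp [h12, h20, Ne.symm h20, h01, Ne.symm h01, Ne.symm h12]
  · have e01 : s(v0, v1) ∈ (Lg n).edgeSet := by
      rw [SimpleGraph.mem_edgeSet]
      exact ⟨show (0 : ℕ) / 2 = (1 : ℕ) / 2 by omega, h01⟩
    have e12 : s(v1, v2) ∉ (Lg n).edgeSet := by
      rw [SimpleGraph.mem_edgeSet]
      rintro ⟨h, -⟩
      have h' : (1 : ℕ) / 2 = (2 : ℕ) / 2 := h
      omega
    have e20 : s(v2, v0) ∉ (Lg n).edgeSet := by
      rw [SimpleGraph.mem_edgeSet]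
      rintro ⟨h, -⟩
      have h' : (2 : ℕ) / 2 = (0 : ℕ) / 2 := h
      omega
    rw [wWeight]
    simp only [SimpleGraph.Walk.edges_cons, SimpleGraph.Walk.edges_nil, List.map_cons,
      List.map_nil, List.sum_cons, List.sum_nil]
    rw [if_pos e01, if_neg e12, if_neg e20]
    omega

/-- For even `b ≥ 2`, the minimum order of a `(1,b)`-regular weighted graph of
girth 5 is exactly `b + 2`. -/
theorem stmt_16 (b : ℕ) (hb : 2 ≤ b) (hbe : b % 2 = 0) :
    IsLeast {n : ℕ | ∃ L H : SimpleGraph (Fin n), IsWGraph L H 1 b 5}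
      (b + 2) := by
  constructor
  · -- membership: the construction on `b + 2` vertices
    have hn4 : 4 ≤ b + 2 := by omega
    have hn : (b + 2) % 2 = 0 := by omega
    refine ⟨Lg (b + 2), (Lg (b + 2))ᶜ, disjoint_compl_right, Lg_nbr_card hn,
      fun v => by rw [Lg_compl_nbr_card hn v]; omega, exists_cycle5 hn4 hn, ?_⟩
    intro u w hw
    exact wWeight_ge' _ _ Lg_unique w hw
  · -- lower bound
    rintro n ⟨L, H, hdisj, hLreg, hHreg, ⟨u, w, hwc, hw5⟩, hmin⟩
    exact lower_bound' L H u hdisj (hLreg u) (hHreg u)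
end

section
/- For every integer b ≥ 1, the minimum order of a weighted graph G = (L,H) with L 1-regular, H b-regular, disjoint edge sets, and girth 6 (minimum cycle weight 6 with L-edges weight 1 and H-edges weight 2) is exactly 2b + 2. In particular, taking H to be the disjoint union of two copies of K_{b+1} and L a perfect matching between them achieves the bound. -/
open SimpleGraph

abbrev SV (b : ℕ) := Fin (b+1) ⊕ Fin (b+1)

def Hgr (b : ℕ) : SimpleGraph (SV b) where
  Adj u v := u ≠ v ∧ ((u.isLeft ∧ v.isLeft) ∨ (u.isRight ∧ v.isRight))
  symm := ⟨fun u v ⟨h1, h2⟩ => ⟨h1.symm, h2.imp And.symm And.symm⟩⟩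
  loopless := ⟨fun u ⟨h, _⟩ => h rfl⟩

def Lgr (b : ℕ) : SimpleGraph (SV b) where
  Adj u v := ∃ i, u = Sum.inl i ∧ v = Sum.inr i ∨ u = Sum.inr i ∧ v = Sum.inl i
  symm := ⟨fun u v ⟨i, h⟩ => ⟨i, (h.imp And.symm And.symm).symm⟩⟩
  loopless := ⟨fun u ⟨i, h⟩ => by rcases h with ⟨h1, h2⟩ | ⟨h1, h2⟩ <;> simp_all⟩

lemma Lmatch {b : ℕ} {x y z : SV b} (h1 : (Lgr b).Adj x y) (h2 : (Lgr b).Adj x z) :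
    y = z := by
  obtain ⟨i, hi⟩ := h1
  obtain ⟨j, hj⟩ := h2
  rcases hi with ⟨rfl, rfl⟩ | ⟨rfl, rfl⟩ <;> rcases hj with ⟨h, rfl⟩ | ⟨h, rfl⟩ <;>
    simp_all

lemma Lcross {b : ℕ} {x y : SV b} (h : (Lgr b).Adj x y) : x.isLeft ≠ y.isLeft := by
  obtain ⟨i, hi⟩ := h
  rcases hi with ⟨rfl, rfl⟩ | ⟨rfl, rfl⟩ <;> simp

lemma Hsame {b : ℕ} {x y : SV b} (h : (Hgr b).Adj x y) : x.isLeft = y.isLeft := by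
  obtain ⟨-, h⟩ := h
  rcases h with ⟨h1, h2⟩ | ⟨h1, h2⟩ <;> cases x <;> cases y <;> simp_all

lemma LHdisj (b : ℕ) : Disjoint (Lgr b) (Hgr b) := by
  rw [← SimpleGraph.disjoint_edgeSet, Set.disjoint_left]
  intro e he he'
  induction e using Sym2.ind with
  | _ x y =>
    rw [SimpleGraph.mem_edgeSet] at he he'
    exact Lcross he (Hsame he')

lemma Lnbr {b : ℕ} (v : SV b) : ((Lgr b).neighborSet v).ncard = 1 := by
  cases v with
  | inl i =>
    have : (Lgr b).neighborSet (Sum.inl i) = {Sum.inr i} := by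
      ext x
      constructor
      · intro h
        exact (Lmatch (⟨i, Or.inl ⟨rfl, rfl⟩⟩ : (Lgr b).Adj (Sum.inl i) (Sum.inr i)) h).symm
      · rintro rfl
        exact ⟨i, Or.inl ⟨rfl, rfl⟩⟩
    rw [this, Set.ncard_singleton]
  | inr i =>
    have : (Lgr b).neighborSet (Sum.inr i) = {Sum.inl i} := by
      ext x
      constructor
      · intro h
        exact (Lmatch (⟨i, Or.inr ⟨rfl, rfl⟩⟩ : (Lgr b).Adj (Sum.inr i) (Sum.inl i)) h).symm
      · rintro rfl
        exact ⟨i, Or.inr ⟨rfl, rfl⟩⟩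
    rw [this, Set.ncard_singleton]

lemma Hnbr {b : ℕ} (v : SV b) : ((Hgr b).neighborSet v).ncard = b := by
  have key : ∀ (i : Fin (b+1)), ({i}ᶜ : Set (Fin (b+1))).ncard = b := by
    intro i
    rw [Set.ncard_eq_toFinset_card']
    simp [Set.toFinset_compl, Finset.card_compl]
  cases v with
  | inl i =>
    have : (Hgr b).neighborSet (Sum.inl i) = Sum.inl '' {i}ᶜ := by
      ext x
      cases x <;> simp [Hgr, SimpleGraph.mem_neighborSet, ne_comm]
    rw [this, Set.ncard_image_of_injective _ Sum.inl_injective, key]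
  | inr i =>
    have : (Hgr b).neighborSet (Sum.inr i) = Sum.inr '' {i}ᶜ := by
      ext x
      cases x <;> simp [Hgr, SimpleGraph.mem_neighborSet, ne_comm]
    rw [this, Set.ncard_image_of_injective _ Sum.inr_injective, key]

lemma heavy_of_not_light {b : ℕ} {x y : SV b} (h : ((Lgr b) ⊔ (Hgr b)).Adj x y)
    (hn : ¬ (Lgr b).Adj x y) : (Hgr b).Adj x y := by
  rcases h with h | h
  · exact absurd h hn
  · exact h

lemma exists_hex {b : ℕ} (hb : 1 ≤ b) :
    ∃ (u : SV b) (w : ((Lgr b) ⊔ (Hgr b)).Walk u u), w.IsCycle ∧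
      wWeight (Lgr b) (Hgr b) w = 6 := by
  have h01 : (0 : Fin (b+1)) ≠ 1 := by
    have : ((1 : Fin (b+1)) : ℕ) = 1 := by
      simp [Fin.val_one']
      omega
    intro h
    rw [Fin.ext_iff, this] at h
    simp at h
  have a1 : ((Lgr b) ⊔ (Hgr b)).Adj (Sum.inl 0) (Sum.inr 0) :=
    Or.inl ⟨0, Or.inl ⟨rfl, rfl⟩⟩
  have a2 : ((Lgr b) ⊔ (Hgr b)).Adj (Sum.inr 0) (Sum.inr 1) :=
    Or.inr ⟨by simp [h01], Or.inr ⟨rfl, rfl⟩⟩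
  have a3 : ((Lgr b) ⊔ (Hgr b)).Adj (Sum.inr 1) (Sum.inl 1) :=
    Or.inl ⟨1, Or.inr ⟨rfl, rfl⟩⟩
  have a4 : ((Lgr b) ⊔ (Hgr b)).Adj (Sum.inl 1) (Sum.inl 0) :=
    Or.inr ⟨by simp [h01.symm], Or.inl ⟨rfl, rfl⟩⟩
  refine ⟨Sum.inl 0, .cons a1 (.cons a2 (.cons a3 (.cons a4 .nil))), ?_, ?_⟩
  · rw [SimpleGraph.Walk.isCycle_def, SimpleGraph.Walk.isTrail_def]
    refine ⟨?_, by simp, ?_⟩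
    · simp [h01, h01.symm, Sym2.eq, Sym2.rel_iff]
    · simp [h01, h01.symm]
  · have e1 : s(Sum.inl (0:Fin (b+1)), Sum.inr (0:Fin (b+1))) ∈ (Lgr b).edgeSet :=
      (Lgr b).mem_edgeSet.mpr ⟨0, Or.inl ⟨rfl, rfl⟩⟩
    have e3 : s(Sum.inr (1:Fin (b+1)), Sum.inl (1:Fin (b+1))) ∈ (Lgr b).edgeSet :=
      (Lgr b).mem_edgeSet.mpr ⟨1, Or.inr ⟨rfl, rfl⟩⟩
    have e2 : s(Sum.inr (0:Fin (b+1)), Sum.inr (1:Fin (b+1))) ∉ (Lgr b).edgeSet := by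
      rw [SimpleGraph.mem_edgeSet]
      intro h
      exact Lcross h rfl
    have e4 : s(Sum.inl (1:Fin (b+1)), Sum.inl (0:Fin (b+1))) ∉ (Lgr b).edgeSet := by
      rw [SimpleGraph.mem_edgeSet]
      intro h
      exact Lcross h rfl
    simp [wWeight, e1, e2, e3, e4]

open Classical in
lemma length_le_wsum {V : Type*} (L : SimpleGraph V) (l : List (Sym2 V)) :
    l.length ≤ (l.map fun e => if e ∈ L.edgeSet then 1 else 2).sum := by
  induction l with
  | nil => simp
  | cons x xs ih =>
    simp only [List.map_cons, List.sum_cons, List.length_cons]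
    have : 1 ≤ if x ∈ L.edgeSet then 1 else 2 := by split <;> omega
    omega

lemma parity3 {b : ℕ} {x y z : SV b} (h1 : (Lgr b).Adj x y) (h2 : (Hgr b).Adj y z)
    (h3 : (Hgr b).Adj z x) : False :=
  Lcross h1 ((Hsame h2).trans (Hsame h3)).symm

lemma girth_ge (b : ℕ) : ∀ (u : SV b) (w : ((Lgr b) ⊔ (Hgr b)).Walk u u),
    w.IsCycle → 6 ≤ wWeight (Lgr b) (Hgr b) w := by
  intro u w hw
  have h3 := hw.three_le_length
  cases w with
  | nil => simp at h3
  | @cons _ v1 _ a1 p =>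
  cases p with
  | nil => simp at h3
  | @cons _ v2 _ a2 q =>
  cases q with
  | nil => simp at h3
  | @cons _ v3 _ a3 r =>
  cases r with
  | nil =>
    rw [SimpleGraph.Walk.isCycle_def] at hw
    obtain ⟨-, -, hnd⟩ := hw
    simp at hnd
    obtain ⟨⟨h12, h1u⟩, h2u⟩ := hnd
    by_cases l1 : (Lgr b).Adj u v1 <;>
      by_cases l2 : (Lgr b).Adj v1 v2 <;>
      by_cases l3 : (Lgr b).Adj v2 u <;>
      simp [wWeight, l1, l2, l3] <;>
      exfalso
    · exact h2u (Lmatch l1.symm l2).symm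
    · exact h2u (Lmatch l1.symm l2).symm
    · exact h12 (Lmatch l1 l3.symm)
    · exact parity3 l1 (heavy_of_not_light a2 l2) (heavy_of_not_light a3 l3)
    · exact h1u (Lmatch l2.symm l3)
    · exact parity3 l2 (heavy_of_not_light a3 l3) (heavy_of_not_light a1 l1)
    · exact parity3 l3 (heavy_of_not_light a1 l1) (heavy_of_not_light a2 l2)
  | @cons _ v4 _ a4 s =>
  cases s with
  | nil =>
    rw [SimpleGraph.Walk.isCycle_def] at hw
    obtain ⟨-, -, hnd⟩ := hw
    simp at hnd
    obtain ⟨⟨h12, h13, h1u⟩, ⟨h23, h2u⟩, h3u⟩ := hnd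
    by_cases l1 : (Lgr b).Adj u v1 <;>
      by_cases l2 : (Lgr b).Adj v1 v2 <;>
      by_cases l3 : (Lgr b).Adj v2 v3 <;>
      by_cases l4 : (Lgr b).Adj v3 u <;>
      simp [wWeight, l1, l2, l3, l4] <;>
      try omega
    all_goals exfalso
    · exact h2u (Lmatch l1.symm l2).symm
    · exact h2u (Lmatch l1.symm l2).symm
    · exact h2u (Lmatch l1.symm l2).symm
    · exact h2u (Lmatch l3.symm l4)
    · exact h13 (Lmatch l2.symm l3)
  | @cons _ v5 _ a5 t =>
  cases t with
  | nil =>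
    rw [SimpleGraph.Walk.isCycle_def] at hw
    obtain ⟨-, -, hnd⟩ := hw
    simp at hnd
    obtain ⟨⟨h12, h13, h14, h1u⟩, ⟨h23, h24, h2u⟩, ⟨h34, h3u⟩, h4u⟩ := hnd
    by_cases l1 : (Lgr b).Adj u v1 <;>
      by_cases l2 : (Lgr b).Adj v1 v2 <;>
      by_cases l3 : (Lgr b).Adj v2 v3 <;>
      by_cases l4 : (Lgr b).Adj v3 v4 <;>
      by_cases l5 : (Lgr b).Adj v4 u <;>
      simp [wWeight, l1, l2, l3, l4, l5] <;>
      try omega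
    all_goals exfalso
    · exact h2u (Lmatch l1.symm l2).symm
  | @cons _ v6 _ a6 t' =>
    have hlen : 6 ≤ (SimpleGraph.Walk.cons a1 (.cons a2 (.cons a3 (.cons a4
        (.cons a5 (.cons a6 t')))))).length := by
      simp [SimpleGraph.Walk.length_cons]
    have h2 := length_le_wsum (Lgr b) (SimpleGraph.Walk.cons a1 (.cons a2 (.cons a3
        (.cons a4 (.cons a5 (.cons a6 t')))))).edges
    rw [SimpleGraph.Walk.length_edges] at h2
    unfold wWeight
    omega

lemma cons_isWGraph {b : ℕ} (hb : 1 ≤ b) : IsWGraph (Lgr b) (Hgr b) 1 b 6 :=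
  ⟨LHdisj b, Lnbr, Hnbr, exists_hex hb, girth_ge b⟩

lemma wWeight_map {V W : Type*} {L H : SimpleGraph V} {L' H' : SimpleGraph W}
    (f : (L ⊔ H) →g (L' ⊔ H')) (hf : ∀ x y, L.Adj x y ↔ L'.Adj (f x) (f y))
    {u : V} (w : (L ⊔ H).Walk u u) :
    wWeight L' H' (w.map f) = wWeight L H w := by
  classical
  unfold wWeight
  rw [SimpleGraph.Walk.edges_map, List.map_map]
  congr 1
  apply List.map_congr_left
  intro e _
  induction e using Sym2.ind with
  | _ x y =>
    simp only [Function.comp_apply, Sym2.map_pair_eq]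
    refine if_congr ?_ rfl rfl
    rw [SimpleGraph.mem_edgeSet, SimpleGraph.mem_edgeSet]
    exact (hf x y).symm

lemma IsWGraph.comap {V W : Type*} (e : W ≃ V) {L H : SimpleGraph V} {a b g : ℕ}
    (h : IsWGraph L H a b g) : IsWGraph (L.comap e) (H.comap e) a b g := by
  obtain ⟨hd, hL, hH, ⟨u, w, hc, hw⟩, hall⟩ := h
  have hdisj : Disjoint (L.comap ⇑e) (H.comap ⇑e) := by
    rw [← SimpleGraph.disjoint_edgeSet, Set.disjoint_left] at hd ⊢
    intro x hx hx'
    induction x using Sym2.ind with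
    | _ x y =>
      rw [SimpleGraph.mem_edgeSet] at hx hx'
      exact hd (SimpleGraph.mem_edgeSet _ |>.mpr hx) (SimpleGraph.mem_edgeSet _ |>.mpr hx')
  have hnbr : ∀ (G : SimpleGraph V) (v : W),
      ((G.comap e).neighborSet v).ncard = (G.neighborSet (e v)).ncard := by
    intro G v
    have : (G.comap e).neighborSet v = ⇑e ⁻¹' (G.neighborSet (e v)) := rfl
    rw [this, ← e.image_symm_eq_preimage, Set.ncard_image_of_injective _ e.symm.injective]
  let fwd : ((L.comap e) ⊔ (H.comap e)) →g (L ⊔ H) :=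
    ⟨e, fun {x y} hxy => hxy⟩
  let bwd : (L ⊔ H) →g ((L.comap e) ⊔ (H.comap e)) :=
    ⟨e.symm, fun {x y} hxy => by
      show (L ⊔ H).Adj (e (e.symm x)) (e (e.symm y))
      simpa using hxy⟩
  refine ⟨hdisj, fun v => by rw [hnbr, hL], fun v => by rw [hnbr, hH], ?_, ?_⟩
  · refine ⟨e.symm u, w.map bwd, hc.map (f := bwd) e.symm.injective, ?_⟩
    rw [wWeight_map bwd (fun x y => by show L.Adj x y ↔ L.Adj (e (e.symm x)) (e (e.symm y)); simp), hw]
  · intro v w' hc'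
    have := hall (e v) (w'.map fwd) (hc'.map (f := fwd) e.injective)
    rwa [wWeight_map fwd (fun x y => Iff.rfl)] at this

lemma lower_bound {n b : ℕ} (L H : SimpleGraph (Fin n)) (h : IsWGraph L H 1 b 6) :
    2 * b + 2 ≤ n := by
  obtain ⟨hd, hL, hH, ⟨u0, w0, hc0, -⟩, hall⟩ := h
  have hd_adj : ∀ x y, L.Adj x y → ¬ H.Adj x y := by
    intro x y hx hy
    rw [← SimpleGraph.disjoint_edgeSet, Set.disjoint_left] at hd
    exact hd ((L.mem_edgeSet).mpr hx) ((H.mem_edgeSet).mpr hy)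
  obtain ⟨u, hu⟩ := Set.ncard_eq_one.mp (hL u0)
  set v := u0 with hv
  have hvu : L.Adj v u := by
    have : u ∈ L.neighborSet v := by rw [hu]; exact rfl
    exact this
  have hvne : v ≠ u := L.ne_of_adj hvu
  -- disjointness of the two heavy neighborhoods
  have hdisjN : Disjoint (H.neighborSet v) (H.neighborSet u) := by
    rw [Set.disjoint_left]
    intro w hwv hwu
    have hwv' : H.Adj v w := hwv
    have hwu' : H.Adj u w := hwu
    have hne1 : w ≠ v := fun h => H.irrefl (h ▸ hwv')
    have hne2 : w ≠ u := fun h => H.irrefl (h ▸ hwu')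
    have c1 : (L ⊔ H).Adj v u := Or.inl hvu
    have c2 : (L ⊔ H).Adj u w := Or.inr hwu'
    have c3 : (L ⊔ H).Adj w v := Or.inr hwv'.symm
    have hcyc : (SimpleGraph.Walk.cons c1 (.cons c2 (.cons c3 .nil))).IsCycle := by
      rw [SimpleGraph.Walk.isCycle_def, SimpleGraph.Walk.isTrail_def]
      refine ⟨?_, by simp, ?_⟩
      · simp [hvne, hne1, hne2, hne1.symm, hne2.symm, Ne.symm hvne, Sym2.eq, Sym2.rel_iff]
      · simp [hvne, hne1, hne2, hne1.symm, hne2.symm, Ne.symm hvne]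
    have h6 := hall v _ hcyc
    have e1 : s(v, u) ∈ L.edgeSet := (L.mem_edgeSet).mpr hvu
    have e2 : s(u, w) ∉ L.edgeSet := fun hc =>
      hd_adj u w ((L.mem_edgeSet).mp hc) hwu'
    have e3 : s(w, v) ∉ L.edgeSet := fun hc =>
      hd_adj w v ((L.mem_edgeSet).mp hc) hwv'.symm
    rw [wWeight] at h6
    simp [e1, e2, e3] at h6
  have huN : u ∉ H.neighborSet v ∪ H.neighborSet u := by
    rintro (h1 | h2)
    · exact hd_adj v u hvu h1
    · exact H.irrefl h2
  have hvN : v ∉ insert u (H.neighborSet v ∪ H.neighborSet u) := by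
    rintro (h0 | h1 | h2)
    · exact hvne h0
    · exact H.irrefl h1
    · exact hd_adj u v hvu.symm h2
  have hcard : (insert v (insert u (H.neighborSet v ∪ H.neighborSet u))).ncard
      = 2 * b + 2 := by
    rw [Set.ncard_insert_of_notMem hvN (Set.toFinite _),
      Set.ncard_insert_of_notMem huN (Set.toFinite _),
      Set.ncard_union_eq hdisjN (Set.toFinite _) (Set.toFinite _), hH, hH]
    ring
  calc 2 * b + 2 = _ := hcard.symm
    _ ≤ (Set.univ : Set (Fin n)).ncard :=
        Set.ncard_le_ncard (Set.subset_univ _) (Set.toFinite _)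
    _ = n := by rw [Set.ncard_univ, Nat.card_eq_fintype_card, Fintype.card_fin]

/-- For `b ≥ 1`, the minimum order of a `(1,b)`-regular weighted graph of girth
6 is exactly `2b + 2`; moreover the bound is attained by taking `H` to be two
disjoint copies of `K_{b+1}` (all pairs of distinct vertices on the same side
adjacent) and `L` a perfect matching between the two copies. -/
theorem stmt_18 (b : ℕ) (hb : 1 ≤ b) :
    IsLeast {n : ℕ | ∃ L H : SimpleGraph (Fin n), IsWGraph L H 1 b 6}
      (2 * b + 2) ∧
    (∃ L H : SimpleGraph (Fin (b + 1) ⊕ Fin (b + 1)),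
      (∀ u v : Fin (b + 1) ⊕ Fin (b + 1),
        H.Adj u v ↔ u ≠ v ∧ ((u.isLeft ∧ v.isLeft) ∨ (u.isRight ∧ v.isRight))) ∧
      IsWGraph L H 1 b 6 ∧
      (∀ u v : Fin (b + 1) ⊕ Fin (b + 1), L.Adj u v →
        (u.isLeft ∧ v.isRight) ∨ (u.isRight ∧ v.isLeft))) := by
  constructor
  · constructor
    · have h2 : 2 * b + 2 = (b + 1) + (b + 1) := by ring
      have e : Fin (2 * b + 2) ≃ SV b := (finCongr h2).trans finSumFinEquiv.symm
      exact ⟨(Lgr b).comap e, (Hgr b).comap e, (cons_isWGraph hb).comap e⟩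
    · rintro n ⟨L, H, hLH⟩
      exact lower_bound L H hLH
  · refine ⟨Lgr b, Hgr b, fun u v => Iff.rfl, cons_isWGraph hb, ?_⟩
    rintro u v ⟨i, (⟨rfl, rfl⟩ | ⟨rfl, rfl⟩)⟩ <;> simp
end
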